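/- Second eigenvalue of the uniform k-player dynamic and monotone convergence speed: for the eigenvalues λ_{k,I} = [Σ_{i : (i,i) ∉ I} C(n−1−|I_i|, k−1)] / [n · C(n−1, k−1)] (where I_i = {j ≠ i : (i,j) ∈ I}): (i) λ_{k,∅} = 1; (ii) for every ordered pair i ≠ j, λ_{k,{(i,j)}} = (1/n)(n − 1 + (n−k)/(n−1)); (iii) for every nonempty I ⊆ I × I, λ_{k,I} ≤ (1/n)(n − 1 + (n−k)/(n−1)) < 1, so the second-largest eigenvalue of the uniform k-player dynamic equals (1/n)(n − 1 + (n−k)/(n−1)); and (iv) for 2 ≤ k < k' ≤ n this second eigenvalue is strictly smaller for k' than for k, i.e. the k'-player dynamic converges strictly faster to the stationary distribution than the k-player dynamic. -/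

import Mathlib

open Finset

noncomputable section

/-- A network state: the diagonal entry `S i i` is player `i`'s action status `a_i`,
and the off-diagonal entry `S i j` (for `i ≠ j`) is the link status `g_{ij}`. -/
abbrev NetState (n : ℕ) := Fin n → Fin n → Bool

/-- Numerical (0/1) value of a Boolean coordinate. -/
def bv (x : Bool) : ℝ := if x then 1 else 0

/-- Player `i`'s payoff
`u_i(S) = a_i v_i + h a_i Σ_{j≠i} a_j + φ a_i Σ_{j≠i} g_{ij} g_{ji} a_j
  + Σ_{j≠i} g_{ij} w_{ij} + m Σ_{j≠i} g_{ij} g_{ji}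
  + q Σ_{j,l pairwise distinct from each other and from i} g_{ij} g_{jl} g_{li}`. -/
def payoff (n : ℕ) (v : Fin n → ℝ) (w : Fin n → Fin n → ℝ) (h φ m q : ℝ)
    (S : NetState n) (i : Fin n) : ℝ :=
  bv (S i i) * v i
    + h * bv (S i i) * ∑ j ∈ univ.filter (fun j => j ≠ i), bv (S j j)
    + φ * bv (S i i) * ∑ j ∈ univ.filter (fun j => j ≠ i), bv (S i j) * bv (S j i) * bv (S j j)
    + ∑ j ∈ univ.filter (fun j => j ≠ i), bv (S i j) * w i j
    + m * ∑ j ∈ univ.filter (fun j => j ≠ i), bv (S i j) * bv (S j i)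
    + q * ∑ j ∈ univ.filter (fun j => j ≠ i),
        ∑ l ∈ univ.filter (fun l => l ≠ i ∧ l ≠ j),
          bv (S i j) * bv (S j l) * bv (S l i)

/-- The potential
`Φ(S) = Σ_i a_i v_i + (h/2) Σ_{i≠j} a_i a_j + (φ/2) Σ_{i≠j} a_i a_j g_{ij} g_{ji}
  + Σ_{i≠j} g_{ij} w_{ij} + (m/2) Σ_{i≠j} g_{ij} g_{ji}
  + (q/3) Σ_{i,j,l pairwise distinct} g_{ij} g_{jl} g_{li}`. -/
def potential (n : ℕ) (v : Fin n → ℝ) (w : Fin n → Fin n → ℝ) (h φ m q : ℝ)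
    (S : NetState n) : ℝ :=
  (∑ i, bv (S i i) * v i)
    + (h / 2) * ∑ i, ∑ j ∈ univ.filter (fun j => j ≠ i), bv (S i i) * bv (S j j)
    + (φ / 2) * ∑ i, ∑ j ∈ univ.filter (fun j => j ≠ i),
        bv (S i i) * bv (S j j) * bv (S i j) * bv (S j i)
    + (∑ i, ∑ j ∈ univ.filter (fun j => j ≠ i), bv (S i j) * w i j)
    + (m / 2) * ∑ i, ∑ j ∈ univ.filter (fun j => j ≠ i), bv (S i j) * bv (S j i)
    + (q / 3) * ∑ i, ∑ j ∈ univ.filter (fun j => j ≠ i),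
        ∑ l ∈ univ.filter (fun l => l ≠ i ∧ l ≠ j), bv (S i j) * bv (S j l) * bv (S l i)

/-- `I_i = {j ≠ i : (i,j) ∈ K}`. -/
def lamIdx (n : ℕ) (K : Finset (Fin n × Fin n)) (i : Fin n) : Finset (Fin n) :=
  univ.filter (fun j => j ≠ i ∧ (i, j) ∈ K)

open scoped Classical in
/-- The eigenvalue `λ_{k,K} = [Σ_{i : (i,i) ∉ K} C(n−1−|I_i|, k−1)] / [n · C(n−1, k−1)]`. -/
noncomputable def lam (n k : ℕ) (K : Finset (Fin n × Fin n)) : ℝ :=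
  (∑ i ∈ univ.filter (fun i => (i, i) ∉ K),
      (((n - 1 - (lamIdx n K i).card).choose (k - 1) : ℕ) : ℝ))
    / ((n : ℝ) * (((n - 1).choose (k - 1) : ℕ) : ℝ))

/-- **Second eigenvalue of the uniform `k`-player dynamic and monotone convergence speed.**
(i) `λ_{k,∅} = 1`; (ii) for every ordered pair `i ≠ j`,
`λ_{k,{(i,j)}} = (1/n)(n − 1 + (n−k)/(n−1))`; (iii) for every nonempty `K`,
`λ_{k,K} ≤ (1/n)(n − 1 + (n−k)/(n−1)) < 1`, so this value is the second-largest eigenvalue;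
(iv) for `2 ≤ k < k' ≤ n` the second eigenvalue is strictly smaller for `k'` than for `k`,
i.e. the `k'`-player dynamic converges strictly faster to the stationary distribution. -/

lemma choose_rel_aux (n k : ℕ) (h2 : 2 ≤ n) (hk : 1 ≤ k) :
    (n-2).choose (k-1) * (n-1) = (n-1).choose (k-1) * (n-k) := by
  have h := Nat.choose_mul_succ_eq (n-2) (k-1)
  rw [show n - 2 + 1 = n - 1 from by omega] at h
  rwa [show n - 1 - (k - 1) = n - k from by omega] at h

lemma key_div_aux (n k : ℕ) (hk : 2 ≤ k) (hkn : k ≤ n) :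
    ((((n-1) * (n-1).choose (k-1) + (n-2).choose (k-1) : ℕ)) : ℝ)
      / ((n : ℝ) * ((n-1).choose (k-1) : ℕ))
    = (1 / (n : ℝ)) * ((n : ℝ) - 1 + ((n : ℝ) - (k : ℝ)) / ((n : ℝ) - 1)) := by
  have h2n : 2 ≤ n := le_trans hk hkn
  have hA : 0 < (n-1).choose (k-1) := Nat.choose_pos (by omega)
  have hrel : ((n-2).choose (k-1) : ℝ) * ((n:ℝ) - 1)
      = ((n-1).choose (k-1) : ℝ) * ((n:ℝ) - (k:ℝ)) := by
    have h1 := choose_rel_aux n k h2n (by omega)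
    have h2 := congrArg (Nat.cast : ℕ → ℝ) h1
    push_cast [Nat.cast_sub (by omega : 1 ≤ n), Nat.cast_sub hkn] at h2
    convert h2 using 2
  have hN : (n:ℝ) ≠ 0 := by positivity
  have hN1 : (n:ℝ) - 1 ≠ 0 := by
    have : (2:ℝ) ≤ n := by exact_mod_cast h2n
    linarith
  have hAne : ((n-1).choose (k-1) : ℝ) ≠ 0 := by exact_mod_cast hA.ne'
  push_cast [Nat.cast_sub (by omega : 1 ≤ n)]
  field_simp
  ring_nf
  nlinarith [hrel]

theorem second_eigenvalue (n k : ℕ) (hk : 2 ≤ k) (hkn : k ≤ n) :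
    lam n k (∅ : Finset (Fin n × Fin n)) = 1
      ∧ (∀ i j : Fin n, i ≠ j →
          lam n k {(i, j)} = (1 / (n : ℝ)) * ((n : ℝ) - 1 + ((n : ℝ) - (k : ℝ)) / ((n : ℝ) - 1)))
      ∧ (∀ K : Finset (Fin n × Fin n), K.Nonempty →
          lam n k K ≤ (1 / (n : ℝ)) * ((n : ℝ) - 1 + ((n : ℝ) - (k : ℝ)) / ((n : ℝ) - 1)))
      ∧ (1 / (n : ℝ)) * ((n : ℝ) - 1 + ((n : ℝ) - (k : ℝ)) / ((n : ℝ) - 1)) < 1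
      ∧ (∀ k' : ℕ, k < k' → k' ≤ n →
          (1 / (n : ℝ)) * ((n : ℝ) - 1 + ((n : ℝ) - (k' : ℝ)) / ((n : ℝ) - 1))
            < (1 / (n : ℝ)) * ((n : ℝ) - 1 + ((n : ℝ) - (k : ℝ)) / ((n : ℝ) - 1))) :=  by
  classical
  have h2n : 2 ≤ n := le_trans hk hkn
  have hA : 0 < (n-1).choose (k-1) := Nat.choose_pos (by omega)
  have hN : (0:ℝ) < n := by exact_mod_cast (by omega : 0 < n)
  have hN1 : (0:ℝ) < (n:ℝ) - 1 := by
    have : (2:ℝ) ≤ n := by exact_mod_cast h2n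
    linarith
  have hAR : (0:ℝ) < ((n-1).choose (k-1) : ℕ) := by exact_mod_cast hA
  -- (i)
  have part1 : lam n k (∅ : Finset (Fin n × Fin n)) = 1 := by
    unfold lam lamIdx
    simp only [notMem_empty, not_false_iff, filter_true_of_mem, mem_univ, implies_true,
      and_false, filter_false, card_empty, Nat.sub_zero, sum_const, card_univ, Fintype.card_fin,
      nsmul_eq_mul]
    rw [div_self]
    positivity
  -- (ii)
  have part2 : ∀ i j : Fin n, i ≠ j →
      lam n k {(i, j)} = (1 / (n : ℝ)) * ((n : ℝ) - 1 + ((n : ℝ) - (k : ℝ)) / ((n : ℝ) - 1)) := by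
    intro i0 j0 hij
    have hsum : (∑ i ∈ univ.filter (fun i => (i, i) ∉ ({(i0,j0)} : Finset (Fin n × Fin n))),
        (((n - 1 - (lamIdx n {(i0,j0)} i).card).choose (k - 1) : ℕ) : ℝ))
        = (((n-1) * (n-1).choose (k-1) + (n-2).choose (k-1) : ℕ) : ℝ) := by
      have hfil : univ.filter (fun i : Fin n => (i, i) ∉ ({(i0,j0)} : Finset (Fin n × Fin n)))
          = univ := by
        apply filter_true_of_mem
        intro i _
        simp only [mem_singleton, Prod.mk.injEq, not_and]
        rintro rfl rfl; exact hij rfl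
      rw [hfil]
      rw [← Finset.add_sum_erase univ _ (mem_univ i0)]
      have hIi0 : lamIdx n {(i0,j0)} i0 = {j0} := by
        ext j
        simp [lamIdx, mem_singleton, Prod.mk.injEq]
        intro h; subst h; exact fun h' => absurd h'.symm hij
      have hrest : ∀ i ∈ univ.erase i0, lamIdx n {(i0,j0)} i = ∅ := by
        intro i hi
        rw [mem_erase] at hi
        ext j
        simp [lamIdx, Prod.mk.injEq]
        intro _ h; exact absurd h hi.1
      rw [Finset.sum_congr rfl (fun i hi => by rw [hrest i hi])]
      simp only [hIi0, card_singleton, card_empty, Nat.sub_zero, sum_const,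
        card_erase_of_mem (mem_univ i0), card_univ, Fintype.card_fin, nsmul_eq_mul]
      push_cast
      rw [show n - 1 - 1 = n - 2 from by omega]
      ring
    unfold lam
    rw [hsum, key_div_aux n k hk hkn]
  -- (iii) bound
  have part3 : ∀ K : Finset (Fin n × Fin n), K.Nonempty →
      lam n k K ≤ (1 / (n : ℝ)) * ((n : ℝ) - 1 + ((n : ℝ) - (k : ℝ)) / ((n : ℝ) - 1)) := by
    intro K hKne
    obtain ⟨⟨a, b⟩, hab⟩ := hKne
    have hsum : (∑ i ∈ univ.filter (fun i => (i, i) ∉ K),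
        (n - 1 - (lamIdx n K i).card).choose (k - 1))
        ≤ (n-1) * (n-1).choose (k-1) + (n-2).choose (k-1) := by
      set F := univ.filter (fun i : Fin n => (i, i) ∉ K) with hF
      have hBound : ∀ i : Fin n, (n - 1 - (lamIdx n K i).card).choose (k - 1)
          ≤ (n-1).choose (k-1) :=
        fun i => Nat.choose_le_choose _ (by omega)
      by_cases haa : (a, a) ∈ K
      · -- F ⊆ univ.erase a
        have hsub : F ⊆ univ.erase a := by
          intro i hi
          rw [hF, mem_filter] at hi
          rw [mem_erase]
          refine ⟨fun h => ?_, mem_univ i⟩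
          exact hi.2 (h ▸ haa)
        have hcard : F.card ≤ n - 1 := by
          calc F.card ≤ (univ.erase a).card := card_le_card hsub
          _ = n - 1 := by rw [card_erase_of_mem (mem_univ a), card_univ, Fintype.card_fin]
        calc (∑ i ∈ F, (n - 1 - (lamIdx n K i).card).choose (k - 1))
            ≤ ∑ _i ∈ F, (n-1).choose (k-1) := Finset.sum_le_sum (fun i _ => hBound i)
          _ = F.card * (n-1).choose (k-1) := by rw [sum_const, smul_eq_mul]
          _ ≤ (n-1) * (n-1).choose (k-1) := Nat.mul_le_mul_right _ hcard
          _ ≤ _ := Nat.le_add_right _ _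
      · have hba : b ≠ a := by rintro rfl; exact haa hab
        have haF : a ∈ F := by rw [hF, mem_filter]; exact ⟨mem_univ a, haa⟩
        have hIa : 1 ≤ (lamIdx n K a).card := by
          rw [Nat.one_le_iff_ne_zero, ← Nat.pos_iff_ne_zero, card_pos]
          exact ⟨b, by simp [lamIdx, hba, hab]⟩
        have hca : (n - 1 - (lamIdx n K a).card).choose (k - 1) ≤ (n-2).choose (k-1) :=
          Nat.choose_le_choose _ (by omega)
        have hcardE : (F.erase a).card ≤ n - 1 := by
          calc (F.erase a).card = F.card - 1 := card_erase_of_mem haF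
            _ ≤ n - 1 := by
                have : F.card ≤ n := by
                  calc F.card ≤ univ.card := card_le_card (filter_subset _ _)
                  _ = n := by rw [card_univ, Fintype.card_fin]
                omega
        rw [← Finset.add_sum_erase F _ haF]
        calc (n - 1 - (lamIdx n K a).card).choose (k - 1)
              + ∑ i ∈ F.erase a, (n - 1 - (lamIdx n K i).card).choose (k - 1)
            ≤ (n-2).choose (k-1) + (F.erase a).card * (n-1).choose (k-1) := by
              refine Nat.add_le_add hca ?_
              calc (∑ i ∈ F.erase a, (n - 1 - (lamIdx n K i).card).choose (k - 1))
                  ≤ ∑ _i ∈ F.erase a, (n-1).choose (k-1) :=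
                    Finset.sum_le_sum (fun i _ => hBound i)
                _ = (F.erase a).card * (n-1).choose (k-1) := by rw [sum_const, smul_eq_mul]
          _ ≤ (n-2).choose (k-1) + (n-1) * (n-1).choose (k-1) :=
              Nat.add_le_add_left (Nat.mul_le_mul_right _ hcardE) _
          _ = (n-1) * (n-1).choose (k-1) + (n-2).choose (k-1) := Nat.add_comm _ _
    unfold lam
    rw [← key_div_aux n k hk hkn]
    gcongr
    exact_mod_cast Nat.cast_le.mpr hsum
  -- (iv) strict inequalities
  have hlt1 : (1 / (n : ℝ)) * ((n : ℝ) - 1 + ((n : ℝ) - (k : ℝ)) / ((n : ℝ) - 1)) < 1 := by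
    have hk2 : (2:ℝ) ≤ k := by exact_mod_cast hk
    have hknR : (k:ℝ) ≤ n := by exact_mod_cast hkn
    have hx : ((n:ℝ) - (k:ℝ)) / ((n:ℝ) - 1) < 1 := by
      rw [div_lt_one hN1]; linarith
    have : (n : ℝ) - 1 + ((n : ℝ) - (k : ℝ)) / ((n : ℝ) - 1) < n := by linarith
    calc (1 / (n : ℝ)) * ((n : ℝ) - 1 + ((n : ℝ) - (k : ℝ)) / ((n : ℝ) - 1))
        < (1 / (n : ℝ)) * n := by
          apply mul_lt_mul_of_pos_left this (by positivity)
      _ = 1 := by field_simp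
  have part5 : ∀ k' : ℕ, k < k' → k' ≤ n →
      (1 / (n : ℝ)) * ((n : ℝ) - 1 + ((n : ℝ) - (k' : ℝ)) / ((n : ℝ) - 1))
        < (1 / (n : ℝ)) * ((n : ℝ) - 1 + ((n : ℝ) - (k : ℝ)) / ((n : ℝ) - 1)) := by
    intro k' hkk' _
    have hkk'R : (k:ℝ) < k' := by exact_mod_cast hkk'
    apply mul_lt_mul_of_pos_left ?_ (by positivity)
    have h5 : ((n:ℝ) - (k':ℝ)) / ((n:ℝ) - 1) < ((n:ℝ) - (k:ℝ)) / ((n:ℝ) - 1) :=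
      div_lt_div_of_pos_right (by linarith) hN1
    linarith
  exact ⟨part1, part2, part3, hlt1, part5⟩
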